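/- Fix an integer n ≥ 1 and λ > 0. Let P be the probability measure on (ℝ_{≥0})^n × (ℝ_{≥0})^n given by the product of 2n independent copies of the gamma distribution with shape 1/n and scale λ. Then the pushforward of P under the map (x, y) ↦ ∑_{i=1}^n (x_i − y_i) equals the Laplace distribution with scale λ, i.e., the measure on ℝ with density x ↦ (1/(2λ)) e^{−|x|/λ} with respect to Lebesgue measure. -/

import Mathlib

open MeasureTheory ProbabilityTheory Real
open scoped ENNReal
open scoped ENNReal
open MeasureTheory.Measure intervalIntegral Set

lemma map_op_withDensity (op : ℝ → ℝ → ℝ) (hop : Measurable (fun p : ℝ × ℝ => op p.1 p.2))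
    (sub' : ℝ → ℝ → ℝ) (hj : Measurable (fun p : ℝ × ℝ => sub' p.1 p.2))
    (hsolve : ∀ x y, op x (sub' x y) = y)
    (hpres : ∀ x : ℝ, MeasurePreserving (fun y => sub' x y) volume volume)
    (f g : ℝ → ℝ≥0∞) (hf : Measurable f) (hg : Measurable g) :
    Measure.map (fun p : ℝ × ℝ => op p.1 p.2)
        ((volume.withDensity f).prod (volume.withDensity g))
      = volume.withDensity (fun y => ∫⁻ t, f t * g (sub' t y)) := by
  have hops : ∀ x : ℝ, Measurable (fun y => op x y) :=
    fun x => hop.comp (measurable_const.prodMk measurable_id)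
  have hsubs : ∀ x : ℝ, Measurable (fun y => sub' x y) :=
    fun x => hj.comp (measurable_const.prodMk measurable_id)
  have hsubs2 : ∀ y : ℝ, Measurable (fun x => sub' x y) :=
    fun y => hj.comp (measurable_id.prodMk measurable_const)
  ext s hs
  have hI : Measurable (s.indicator (fun _ => (1:ℝ≥0∞))) := measurable_const.indicator hs
  have hjoint : Measurable (fun p : ℝ × ℝ =>
      f p.1 * (s.indicator (fun _ => (1:ℝ≥0∞)) p.2 * g (sub' p.1 p.2))) := by
    apply Measurable.mul (hf.comp measurable_fst)
    exact Measurable.mul (hI.comp measurable_snd) (hg.comp hj)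
  have key : ∀ x : ℝ,
      (volume.withDensity g) (Prod.mk x ⁻¹' ((fun p : ℝ × ℝ => op p.1 p.2) ⁻¹' s))
      = ∫⁻ y, s.indicator (fun _ => (1:ℝ≥0∞)) y * g (sub' x y) := by
    intro x
    have hset : (Prod.mk x ⁻¹' ((fun p : ℝ × ℝ => op p.1 p.2) ⁻¹' s))
        = (fun y => op x y) ⁻¹' s := rfl
    rw [hset, withDensity_apply _ ((hops x) hs), ← lintegral_indicator ((hops x) hs)]
    have h1 : ∀ y : ℝ, ((fun y => op x y) ⁻¹' s).indicator g y
        = s.indicator (fun _ => (1:ℝ≥0∞)) (op x y) * g y := by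
      intro y
      by_cases hy : op x y ∈ s <;> simp [Set.indicator, hy]
    simp_rw [h1]
    have hm : Measurable (fun y : ℝ => s.indicator (fun _ => (1:ℝ≥0∞)) (op x y) * g y) :=
      (hI.comp (hops x)).mul hg
    have hcomp := (hpres x).lintegral_comp hm
    simp only [Function.comp_def, hsolve] at hcomp
    rw [← hcomp]
  rw [Measure.map_apply hop hs, Measure.prod_apply (hop hs)]
  simp_rw [key]
  have hinner : Measurable (fun x : ℝ => ∫⁻ y, s.indicator (fun _ => (1:ℝ≥0∞)) y * g (sub' x y)) := by
    have : Measurable (fun p : ℝ × ℝ => s.indicator (fun _ => (1:ℝ≥0∞)) p.2 * g (sub' p.1 p.2)) :=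
      (hI.comp measurable_snd).mul (hg.comp hj)
    exact this.lintegral_prod_right'
  rw [lintegral_withDensity_eq_lintegral_mul _ hf hinner]
  have lhs_eq : (∫⁻ x, (f * fun x => ∫⁻ y, s.indicator (fun _ => (1:ℝ≥0∞)) y * g (sub' x y)) x)
      = ∫⁻ x, ∫⁻ y, f x * (s.indicator (fun _ => (1:ℝ≥0∞)) y * g (sub' x y)) := by
    congr 1 with x
    simp only [Pi.mul_apply]
    have hm : Measurable (fun y : ℝ => s.indicator (fun _ => (1:ℝ≥0∞)) y * g (sub' x y)) :=
      hI.mul (hg.comp (hsubs x))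
    rw [lintegral_const_mul'' _ hm.aemeasurable]
  rw [lhs_eq, lintegral_lintegral_swap hjoint.aemeasurable, withDensity_apply _ hs,
    ← lintegral_indicator hs]
  congr 1 with y
  by_cases hy : y ∈ s
  · simp only [Set.indicator_of_mem hy, one_mul]
  · simp [Set.indicator_of_notMem hy]

-- integrability on first half
lemma beta_integrable_half {a b x : ℝ} (ha : 0 < a) (hb : 0 < b) (hx : 0 < x) :
    IntervalIntegrable (fun t => t ^ (a-1) * (x - t) ^ (b-1)) volume 0 (x/2) := by
  set M : ℝ := max (x ^ (b-1)) ((x/2) ^ (b-1)) with hM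
  have hbase : IntervalIntegrable (fun t : ℝ => t ^ (a-1) * M) volume 0 (x/2) :=
    (intervalIntegrable_rpow' (by linarith)).mul_const M
  apply hbase.mono_fun
  · apply ((measurable_id.pow_const _).mul
      ((measurable_const.sub measurable_id).pow_const _)).aestronglyMeasurable
  · rw [Filter.EventuallyLE, ae_restrict_iff' measurableSet_uIoc]
    apply Filter.Eventually.of_forall
    intro t ht
    rw [Set.uIoc_of_le (by linarith : (0:ℝ) ≤ x/2)] at ht
    obtain ⟨ht0, ht2⟩ := ht
    have hxt : 0 < x - t := by linarith
    have h1 : |t ^ (a-1) * (x - t) ^ (b-1)| = t ^ (a-1) * (x - t) ^ (b-1) := by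
      apply abs_of_nonneg
      positivity
    have h2 : |t ^ (a-1) * M| = t ^ (a-1) * M := by
      apply abs_of_nonneg
      apply mul_nonneg (by positivity)
      exact le_trans (by positivity) (le_max_left _ _)
    rw [Real.norm_eq_abs, Real.norm_eq_abs, h1, h2]
    apply mul_le_mul_of_nonneg_left _ (by positivity)
    rcases le_or_gt 0 (b-1) with hb1 | hb1
    · exact le_trans (Real.rpow_le_rpow hxt.le (by linarith) hb1) (le_max_left _ _)
    · refine le_trans ?_ (le_max_right _ _)
      exact Real.rpow_le_rpow_of_nonpos (by linarith) (by linarith) hb1.le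

lemma beta_integrable {a b x : ℝ} (ha : 0 < a) (hb : 0 < b) (hx : 0 < x) :
    IntervalIntegrable (fun t => t ^ (a-1) * (x - t) ^ (b-1)) volume 0 x := by
  have h1 := beta_integrable_half ha hb hx
  have h2 := (beta_integrable_half hb ha hx).comp_sub_left x
  rw [sub_zero] at h2
  have h2' : IntervalIntegrable (fun t => t ^ (a-1) * (x - t) ^ (b-1)) volume (x/2) x := by
    have : (fun t : ℝ => (x - t) ^ (b-1) * (x - (x - t)) ^ (a-1))
        = fun t : ℝ => (x - t) ^ (b-1) * t ^ (a-1) := by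
      funext t; rw [sub_sub_cancel]
    rw [this] at h2
    simp_rw [mul_comm] at h2
    apply h2.symm.mono_set
    rw [Set.uIcc_of_le (by linarith), Set.uIcc_of_le (by linarith)]
    apply Set.Icc_subset_Icc _ le_rfl
    linarith
  exact h1.trans h2'

lemma beta_value {a b x : ℝ} (ha : 0 < a) (hb : 0 < b) (hx : 0 < x) :
    ∫ t in (0:ℝ)..x, t ^ (a-1) * (x - t) ^ (b-1)
      = x ^ (a+b-1) * (Gamma a * Gamma b / Gamma (a+b)) := by
  have hsc := Complex.betaIntegral_scaled (a : ℂ) (b : ℂ) hx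
  have hcongr : (∫ t in (0:ℝ)..x, (t:ℂ) ^ ((a:ℂ) - 1) * ((x:ℂ) - t) ^ ((b:ℂ) - 1))
      = ∫ t in (0:ℝ)..x, ((t ^ (a-1) * (x - t) ^ (b-1) : ℝ) : ℂ) := by
    apply intervalIntegral.integral_congr
    intro t ht
    rw [Set.uIcc_of_le hx.le] at ht
    have h1 : ((a:ℂ) - 1) = ((a - 1 : ℝ) : ℂ) := by push_cast; ring
    have h2 : ((b:ℂ) - 1) = ((b - 1 : ℝ) : ℂ) := by push_cast; ring
    have h3 : ((x:ℂ) - (t:ℂ)) = ((x - t : ℝ) : ℂ) := by push_cast; ring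
    show (t:ℂ) ^ ((a:ℂ) - 1) * ((x:ℂ) - t) ^ ((b:ℂ) - 1) = ((t ^ (a-1) * (x - t) ^ (b-1) : ℝ) : ℂ)
    rw [h1, h2, h3, ← Complex.ofReal_cpow ht.1 (a-1),
      ← Complex.ofReal_cpow (by linarith [ht.2] : (0:ℝ) ≤ x - t) (b-1), ← Complex.ofReal_mul]
  have hbeta : Complex.betaIntegral (a:ℂ) (b:ℂ)
      = ((Gamma a * Gamma b / Gamma (a+b) : ℝ) : ℂ) := by
    have hg := Complex.Gamma_mul_Gamma_eq_betaIntegral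
      (s := (a:ℂ)) (t := (b:ℂ)) (by simpa using ha) (by simpa using hb)
    have hab : ((a:ℂ) + (b:ℂ)) = ((a + b : ℝ) : ℂ) := by push_cast; ring
    rw [hab, Complex.Gamma_ofReal, Complex.Gamma_ofReal, Complex.Gamma_ofReal] at hg
    have hne : ((Gamma (a+b) : ℝ) : ℂ) ≠ 0 := by
      simpa using (Gamma_pos_of_pos (by linarith)).ne'
    field_simp at hg ⊢
    rw [Complex.ofReal_div, Complex.ofReal_mul, eq_div_iff hne]; linear_combination -hg
  have hpow : ((x:ℂ) ^ ((a:ℂ) + (b:ℂ) - 1)) = ((x ^ (a+b-1) : ℝ) : ℂ) := by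
    have : ((a:ℂ) + (b:ℂ) - 1) = ((a + b - 1 : ℝ) : ℂ) := by push_cast; ring
    rw [this, ← Complex.ofReal_cpow hx.le]
  rw [hcongr, intervalIntegral.integral_ofReal, hpow, hbeta, ← Complex.ofReal_mul] at hsc
  exact_mod_cast hsc

lemma measurable_gammaPDF (a r : ℝ) : Measurable (gammaPDF a r) :=
  (measurable_gammaPDFReal a r).ennreal_ofReal

lemma gammaPDF_conv {a b r : ℝ} (ha : 0 < a) (hb : 0 < b) (hr : 0 < r) {x : ℝ} (hx : 0 < x) :
    ∫⁻ t, gammaPDF a r t * gammaPDF b r (x - t) = gammaPDF (a+b) r x := by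
  have hA : ∀ t : ℝ, 0 ≤ gammaPDFReal a r t := gammaPDFReal_nonneg ha hr
  have hB : ∀ t : ℝ, 0 ≤ gammaPDFReal b r t := gammaPDFReal_nonneg hb hr
  have step1 : ∀ t : ℝ, gammaPDF a r t * gammaPDF b r (x - t)
      = ENNReal.ofReal (gammaPDFReal a r t * gammaPDFReal b r (x - t)) := by
    intro t
    rw [gammaPDF, gammaPDF, ← ENNReal.ofReal_mul (hA t)]
  simp_rw [step1]
  set C : ℝ := r ^ a / Gamma a * (r ^ b / Gamma b) * Real.exp (-(r * x)) with hC
  set N : ℝ → ℝ := fun t => C * (t ^ (a-1) * (x - t) ^ (b-1)) with hN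
  have stepae : (fun t => ENNReal.ofReal (gammaPDFReal a r t * gammaPDFReal b r (x - t)))
      =ᵐ[volume] (fun t => (Set.Ioc 0 x).indicator (fun t => ENNReal.ofReal (N t)) t) := by
    have : ∀ t : ℝ, t ≠ 0 → ENNReal.ofReal (gammaPDFReal a r t * gammaPDFReal b r (x - t))
        = (Set.Ioc 0 x).indicator (fun t => ENNReal.ofReal (N t)) t := by
      intro t ht
      by_cases htmem : t ∈ Set.Ioc 0 x
      · rw [Set.indicator_of_mem htmem]
        obtain ⟨ht0, htx⟩ := htmem
        congr 1
        rw [gammaPDFReal, gammaPDFReal, if_pos ht0.le, if_pos (by linarith : (0:ℝ) ≤ x - t), hN, hC]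
        have hexp : rexp (-(r * t)) * rexp (-(r * (x - t))) = rexp (-(r * x)) := by
          rw [← Real.exp_add]; congr 1; ring
        linear_combination (r ^ a / Gamma a * t ^ (a-1) * (r ^ b / Gamma b * (x - t) ^ (b-1))) * hexp
      · rw [Set.indicator_of_notMem htmem]
        rcases not_and_or.mp htmem with h | h
        · have ht0 : t < 0 := lt_of_le_of_ne (not_lt.mp h) ht
          rw [gammaPDFReal, if_neg (not_le.mpr ht0), zero_mul, ENNReal.ofReal_zero]
        · have htx : x < t := not_le.mp h
          have hzero : gammaPDFReal b r (x - t) = 0 := by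
            rw [gammaPDFReal, if_neg (not_le.mpr (by linarith))]
          rw [hzero, mul_zero, ENNReal.ofReal_zero]
    filter_upwards [compl_mem_ae_iff.mpr (volume_singleton (a := (0:ℝ)))] with t ht
    exact this t ht
  have hGa : 0 < Gamma a := Gamma_pos_of_pos ha
  have hGb : 0 < Gamma b := Gamma_pos_of_pos hb
  have hGab : 0 < Gamma (a+b) := Gamma_pos_of_pos (by linarith)
  have hCpos : 0 < C := by rw [hC]; positivity
  rw [lintegral_congr_ae stepae, lintegral_indicator measurableSet_Ioc]
  have hint : IntegrableOn N (Set.Ioc 0 x) := by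
    exact ((beta_integrable ha hb hx).1).const_mul C
  have hnn : 0 ≤ᵐ[volume.restrict (Set.Ioc 0 x)] N := by
    rw [Filter.EventuallyLE, ae_restrict_iff' measurableSet_Ioc]
    apply Filter.Eventually.of_forall
    intro t ⟨ht0, htx⟩
    have h1 : (0:ℝ) ≤ t ^ (a-1) := Real.rpow_nonneg ht0.le _
    have h2 : (0:ℝ) ≤ (x - t) ^ (b-1) := Real.rpow_nonneg (by linarith) _
    simp only [Pi.zero_apply, hN]
    positivity
  rw [← ofReal_integral_eq_lintegral_ofReal hint hnn]
  have hval : ∫ t in Set.Ioc 0 x, N t = C * (x ^ (a+b-1) * (Gamma a * Gamma b / Gamma (a+b))) := by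
    rw [← intervalIntegral.integral_of_le hx.le]
    simp only [hN]
    rw [intervalIntegral.integral_const_mul, beta_value ha hb hx]
  rw [hval, gammaPDF_of_nonneg hx.le]
  congr 1
  rw [hC, Real.rpow_add hr]
  field_simp

lemma gammaMeasure_map_add {a b r : ℝ} (ha : 0 < a) (hb : 0 < b) (hr : 0 < r) :
    Measure.map (fun p : ℝ × ℝ => p.1 + p.2) ((gammaMeasure a r).prod (gammaMeasure b r))
      = gammaMeasure (a+b) r := by
  rw [gammaMeasure, gammaMeasure, gammaMeasure,
    map_op_withDensity (fun x y => x + y) (by fun_prop) (fun x y => y - x) (by fun_prop)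
      (fun x y => by ring) (fun x => measurePreserving_sub_right volume x)
      _ _ (measurable_gammaPDF a r) (measurable_gammaPDF b r)]
  apply withDensity_congr_ae
  filter_upwards [compl_mem_ae_iff.mpr (volume_singleton (a := (0:ℝ)))] with y hy
  rcases lt_or_gt_of_ne (hy : y ≠ 0) with hneg | hpos
  · have hzero : ∀ t : ℝ, gammaPDF a r t * gammaPDF b r (y - t) = 0 := by
      intro t
      rcases lt_or_ge t 0 with ht | ht
      · rw [gammaPDF_of_neg ht, zero_mul]
      · rw [gammaPDF_of_neg (by linarith : y - t < 0), mul_zero]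
    simp_rw [hzero, lintegral_zero]
    rw [gammaPDF_of_neg hneg]
  · exact gammaPDF_conv ha hb hr hpos

lemma map_sum_pi_gamma {a r : ℝ} (ha : 0 < a) (hr : 0 < r) (n : ℕ) :
    Measure.map (fun p : Fin (n+1) → ℝ => ∑ i, p i)
      (Measure.pi fun _ : Fin (n+1) => gammaMeasure a r) = gammaMeasure ((n+1 : ℕ) * a) r := by
  haveI : IsProbabilityMeasure (gammaMeasure a r) := isProbabilityMeasure_gammaMeasure ha hr
  induction n with
  | zero =>
    have h1 : (fun p : Fin 1 → ℝ => ∑ i, p i)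
        = (MeasurableEquiv.piUnique (fun _ : Fin 1 => ℝ)) := by
      funext p
      simp [MeasurableEquiv.piUnique, Fin.sum_univ_one]
    rw [h1, (measurePreserving_piUnique (fun _ : Fin 1 => gammaMeasure a r)).map_eq]
    norm_num
  | succ n ih =>
    have hmp := (measurePreserving_piFinSuccAbove (fun _ : Fin (n+2) => gammaMeasure a r) 0).symm
    rw [← hmp.map_eq, Measure.map_map (by fun_prop) (MeasurableEquiv.measurable _)]
    have hcomp : ((fun p : Fin (n+2) → ℝ => ∑ i, p i)
          ∘ (MeasurableEquiv.piFinSuccAbove (fun _ : Fin (n+2) => ℝ) 0).symm)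
        = (fun q : ℝ × (Fin (n+1) → ℝ) => q.1 + ∑ j, q.2 j) := by
      funext q
      simp only [Function.comp_apply, MeasurableEquiv.piFinSuccAbove_symm_apply]
      rw [Fin.sum_univ_succAbove _ 0]
      simp
    rw [hcomp]
    have hdecomp : (fun q : ℝ × (Fin (n+1) → ℝ) => q.1 + ∑ j, q.2 j)
        = (fun p : ℝ × ℝ => p.1 + p.2) ∘ (Prod.map id (fun f : Fin (n+1) → ℝ => ∑ j, f j)) := rfl
    rw [hdecomp, ← Measure.map_map measurable_add (measurable_id.prodMap (by fun_prop)),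
      ← Measure.map_prod_map _ _ measurable_id (by fun_prop), Measure.map_id, ih,
      gammaMeasure_map_add ha (by positivity) hr]
    congr 1
    push_cast
    ring
lemma integral_exp_neg_mul_Ioi' {c m : ℝ} (hc : 0 < c) :
    ∫ t in Set.Ioi m, Real.exp (-(c*t)) = Real.exp (-(c*m)) / c := by
  have hderiv : ∀ x ∈ Ici m, HasDerivAt (fun t => -Real.exp (-(c*t)) / c) (Real.exp (-(c*x))) x := by
    intro x _
    have h1 : HasDerivAt (fun t : ℝ => -(c*t)) (-c) x := by
      exact (((hasDerivAt_id x).const_mul c).neg).congr_deriv (by simp)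
    have h2 := (h1.exp.neg.div_const c)
    refine h2.congr_deriv ?_
    field_simp
  have htend : Filter.Tendsto (fun t => -Real.exp (-(c*t)) / c) Filter.atTop (nhds 0) := by
    have h3 : Filter.Tendsto (fun t : ℝ => -(c*t)) Filter.atTop Filter.atBot := by
      simpa [neg_mul] using Filter.tendsto_id.const_mul_atTop_of_neg (neg_neg_iff_pos.2 hc)
    have h4 := (Real.tendsto_exp_atBot.comp h3).neg.div_const c
    simpa using h4
  have hint : IntegrableOn (fun t : ℝ => Real.exp (-(c*t))) (Ioi m) := by
    simpa [neg_mul] using exp_neg_integrableOn_Ioi m hc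
  have := MeasureTheory.integral_Ioi_of_hasDerivAt_of_tendsto' hderiv hint htend
  rw [this]
  ring

lemma map_sub_exp {r : ℝ} (hr : 0 < r) :
    Measure.map (fun p : ℝ × ℝ => p.1 - p.2) ((gammaMeasure 1 r).prod (gammaMeasure 1 r))
      = volume.withDensity (fun y => ENNReal.ofReal (r/2 * Real.exp (-(r * |y|)))) := by
  rw [gammaMeasure, map_op_withDensity (fun x y => x - y) (by fun_prop) (fun x y => x - y)
    (by fun_prop) (fun x y => by ring) (fun x => measurePreserving_sub_left volume x)
    _ _ (measurable_gammaPDF 1 r) (measurable_gammaPDF 1 r)]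
  refine congrArg _ (funext fun y => ?_)
  set m : ℝ := max 0 y with hm
  have hm0 : 0 ≤ m := le_max_left _ _
  have hmy : y ≤ m := le_max_right _ _
  have h2r : 0 < 2*r := by linarith
  have step : ∀ t : ℝ, gammaPDF 1 r t * gammaPDF 1 r (t - y)
      = (Ici m).indicator
          (fun t => ENNReal.ofReal (r * Real.exp (-(r*t)) * (r * Real.exp (-(r*(t-y)))))) t := by
    intro t
    by_cases ht : t ∈ Ici m
    · have ht' : m ≤ t := ht
      rw [Set.indicator_of_mem ht, gammaPDF, gammaPDF,
        ← ENNReal.ofReal_mul (gammaPDFReal_nonneg one_pos hr t)]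
      congr 1
      rw [gammaPDFReal, gammaPDFReal, if_pos (by linarith : (0:ℝ) ≤ t),
        if_pos (by linarith : (0:ℝ) ≤ t - y), Real.Gamma_one,
        show (1:ℝ) - 1 = 0 by norm_num, Real.rpow_zero, Real.rpow_zero, Real.rpow_one]
      ring
    · have ht' : t < m := not_le.mp ht
      rw [Set.indicator_of_notMem ht]
      rcases lt_max_iff.mp (hm ▸ ht') with h | h
      · rw [gammaPDF_of_neg h, zero_mul]
      · rw [gammaPDF_of_neg (by linarith : t - y < 0), mul_zero]
  simp_rw [step]
  rw [lintegral_indicator measurableSet_Ici,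
    setLIntegral_congr (Ioi_ae_eq_Ici (a := m)).symm]
  have hcomb : ∀ t : ℝ, r * Real.exp (-(r*t)) * (r * Real.exp (-(r*(t-y))))
      = (r*r*Real.exp (r*y)) * Real.exp (-(2*r*t)) := by
    intro t
    rw [mul_mul_mul_comm, ← Real.exp_add,
      mul_assoc (r*r) (Real.exp (r*y)) (Real.exp (-(2*r*t))), ← Real.exp_add]
    congr 1
    ring
  simp_rw [hcomb]
  have hint : IntegrableOn (fun t : ℝ => (r*r*Real.exp (r*y)) * Real.exp (-(2*r*t))) (Ioi m) := by
    simpa [neg_mul, mul_assoc, IntegrableOn] using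
      ((exp_neg_integrableOn_Ioi m h2r).const_mul (r*r*Real.exp (r*y)))
  have hnn : 0 ≤ᵐ[volume.restrict (Ioi m)]
      (fun t : ℝ => (r*r*Real.exp (r*y)) * Real.exp (-(2*r*t))) :=
    Filter.Eventually.of_forall (fun t => by positivity)
  rw [← ofReal_integral_eq_lintegral_ofReal hint hnn, MeasureTheory.integral_const_mul,
    integral_exp_neg_mul_Ioi' h2r]
  congr 1
  have hexp : Real.exp (r*y) * Real.exp (-(2*r*m)) = Real.exp (-(r*|y|)) := by
    rw [← Real.exp_add]
    congr 1
    rcases le_total 0 y with h | h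
    · rw [abs_of_nonneg h, hm, max_eq_right h]; ring
    · rw [abs_of_nonpos h, hm, max_eq_left h]; ring
  rw [← hexp]
  field_simp


/-- Divisibility of the Laplace distribution: the sum `∑ i (G₁ᵢ - G₂ᵢ)` of differences of
`2n` i.i.d. gamma random variables with shape `1/n` and scale `λ` (i.e. rate `1/λ`)
has the Laplace distribution with scale `λ`. -/
theorem laplace_divisibility (n : ℕ) (hn : 1 ≤ n) (lam : ℝ) (hlam : 0 < lam) :
    Measure.map (fun p : (Fin n → ℝ) × (Fin n → ℝ) => ∑ i, (p.1 i - p.2 i))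
        ((Measure.pi fun _ : Fin n => gammaMeasure (1 / (n : ℝ)) (1 / lam)).prod
          (Measure.pi fun _ : Fin n => gammaMeasure (1 / (n : ℝ)) (1 / lam)))
      = volume.withDensity
          (fun x : ℝ => ENNReal.ofReal (1 / (2 * lam) * Real.exp (-|x| / lam))) := by
  obtain ⟨m, rfl⟩ : ∃ m, n = m + 1 := ⟨n - 1, (Nat.succ_pred_eq_of_pos hn).symm⟩
  have hr : 0 < 1 / lam := by positivity
  have ha : 0 < 1 / ((m+1 : ℕ) : ℝ) := by positivity
  haveI : IsProbabilityMeasure (gammaMeasure (1 / ((m+1 : ℕ) : ℝ)) (1 / lam)) :=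
    isProbabilityMeasure_gammaMeasure ha hr
  have hS : Measurable (fun f : Fin (m+1) → ℝ => ∑ i, f i) := by fun_prop
  have hcomp : (fun p : (Fin (m+1) → ℝ) × (Fin (m+1) → ℝ) => ∑ i, (p.1 i - p.2 i))
      = (fun q : ℝ × ℝ => q.1 - q.2)
        ∘ (Prod.map (fun f : Fin (m+1) → ℝ => ∑ i, f i) (fun f : Fin (m+1) → ℝ => ∑ i, f i)) := by
    funext p
    simp [Finset.sum_sub_distrib]
  have hone : gammaMeasure (((m+1 : ℕ) : ℝ) * (1 / ((m+1 : ℕ) : ℝ))) (1 / lam)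
      = gammaMeasure 1 (1 / lam) := by
    congr 1
    field_simp
  rw [hcomp, ← Measure.map_map (by fun_prop) (hS.prodMap hS),
    ← Measure.map_prod_map _ _ hS hS, map_sum_pi_gamma ha hr m, hone, map_sub_exp hr]
  refine congrArg _ (funext fun y => ?_)
  congr 1
  rw [show -(1/lam * |y|) = -|y|/lam by ring, show (1/lam)/2 = 1/(2*lam) by ring]
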